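/- There exists a constant k ∈ ℕ such that for every one-variable first-order modal formula φ with counting quantifiers: if φ has a quasimodel, then φ has a quasimodel (W,≺,q,I,{r_i}_{i∈I}) in which both |W| ≤ 2^{(|φ|+2)^k} and |I| ≤ 2^{(|φ|+2)^k}; that is, φ has a finite quasimodel whose underlying tree and index set are of size at most exponential in a fixed polynomial of the length of φ. -/

import Mathlib

/-! Syntax of one-variable first-order modal formulas with counting quantifiers:
    φ ::= P(x) | ¬φ | (φ∧φ) | ◇φ | ∃[≤c]x φ. -/

inductive Fml : Type
  | atom : ℕ → Fml
  | neg : Fml → Fml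
  | conj : Fml → Fml → Fml
  | dia : Fml → Fml
  | countLe : ℕ → Fml → Fml
deriving DecidableEq

namespace Fml

/-- Subformulas. -/
def sub : Fml → Finset Fml
  | atom n => {atom n}
  | neg ψ => insert (neg ψ) ψ.sub
  | conj ψ χ => insert (conj ψ χ) (ψ.sub ∪ χ.sub)
  | dia ψ => insert (dia ψ) ψ.sub
  | countLe c ψ => insert (countLe c ψ) ψ.sub

/-- Modal depth. -/
def md : Fml → ℕ
  | atom _ => 0
  | neg ψ => ψ.md
  | conj ψ χ => max ψ.md χ.md
  | dia ψ => ψ.md + 1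
  | countLe _ ψ => ψ.md

/-- Capacity: the largest counting-quantifier subscript (0 if none). -/
def cpt : Fml → ℕ
  | atom _ => 0
  | neg ψ => ψ.cpt
  | conj ψ χ => max ψ.cpt χ.cpt
  | dia ψ => ψ.cpt
  | countLe c ψ => max c ψ.cpt

/-- Length of the formula as a string, counting subscripts written in binary. -/
def len : Fml → ℕ
  | atom _ => 1
  | neg ψ => ψ.len + 1
  | conj ψ χ => ψ.len + χ.len + 1
  | dia ψ => ψ.len + 1
  | countLe c ψ => ψ.len + Nat.size c + 1

/-- Predicate symbols occurring in a formula. -/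
def preds : Fml → Finset ℕ
  | atom n => {n}
  | neg ψ => ψ.preds
  | conj ψ χ => ψ.preds ∪ χ.preds
  | dia ψ => ψ.preds
  | countLe _ ψ => ψ.preds

def imp (ψ χ : Fml) : Fml := neg (conj ψ (neg χ))
def or (ψ χ : Fml) : Fml := neg (conj (neg ψ) (neg χ))
def iff (ψ χ : Fml) : Fml := conj (ψ.imp χ) (χ.imp ψ)
def box (ψ : Fml) : Fml := neg (dia (neg ψ))
/-- `∃x ψ := ¬∃[≤0]x ψ`. -/
def ex (ψ : Fml) : Fml := neg (countLe 0 ψ)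
/-- `∀x ψ := ∃[≤0]x ¬ψ`. -/
def fal (ψ : Fml) : Fml := countLe 0 (neg ψ)
/-- A tautology. -/
def top : Fml := neg (conj (atom 0) (neg (atom 0)))

/-- `boxIter n ψ` is `□^n ψ`. -/
def boxIter : ℕ → Fml → Fml
  | 0, ψ => ψ
  | n+1, ψ => (boxIter n ψ).box

/-- `boxLe m ψ` is `⋀_{k=0}^{m} □^k ψ`. -/
def boxLe : ℕ → Fml → Fml
  | 0, ψ => ψ
  | n+1, ψ => conj (boxLe n ψ) (boxIter (n+1) ψ)

end Fml

/-- A first-order Kripke model `M = (W,R,D,d,I)` (unary predicates suffice for the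
one-variable fragment). -/
structure KModel where
  W : Type
  R : W → W → Prop
  D : Type
  Dne : Nonempty D
  dom : W → Set D
  domNe : ∀ w, (dom w).Nonempty
  I : W → ℕ → Set D
  Isub : ∀ w p, I w p ⊆ dom w

/-- Satisfaction `M,w ⊨^a φ`. -/
def KModel.sat (M : KModel) : Fml → M.W → M.D → Prop
  | .atom p, w, a => a ∈ M.I w p
  | .neg ψ, w, a => ¬ M.sat ψ w a
  | .conj ψ χ, w, a => M.sat ψ w a ∧ M.sat χ w a
  | .dia ψ, w, a => ∃ v, M.R w v ∧ M.sat ψ v a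
  | .countLe c ψ, w, _ => {b | b ∈ M.dom w ∧ M.sat ψ w b}.encard ≤ (c : ℕ∞)

def KModel.constDom (M : KModel) : Prop := ∀ u v, M.dom u = M.dom v
def KModel.expDom (M : KModel) : Prop := ∀ u v, M.R u v → M.dom u ⊆ M.dom v
def KModel.decDom (M : KModel) : Prop := ∀ u v, M.R u v → M.dom v ⊆ M.dom u

/-- Satisfiability with respect to QK (constant domains). -/
def satQK (φ : Fml) : Prop :=
  ∃ M : KModel, M.constDom ∧ ∃ w a, a ∈ M.dom w ∧ M.sat φ w a

/-- Satisfiability with respect to QK^exp (expanding domains). -/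
def satQKexp (φ : Fml) : Prop :=
  ∃ M : KModel, M.expDom ∧ ∃ w a, a ∈ M.dom w ∧ M.sat φ w a

/-- Satisfiability with respect to QK^dec (decreasing domains). -/
def satQKdec (φ : Fml) : Prop :=
  ∃ M : KModel, M.decDom ∧ ∃ w a, a ∈ M.dom w ∧ M.sat φ w a

/-- `R` is the immediate-successor (parent–child) relation of a rooted irreflexive
intransitive tree of depth ≤ m with root `r`. -/
def IsTreeOfDepth {W : Type} (R : W → W → Prop) (r : W) (m : ℕ) : Prop :=
  ∃ depth : W → ℕ,
    depth r = 0 ∧ (∀ w, depth w ≤ m) ∧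
    (∀ u v, R u v → depth v = depth u + 1) ∧
    (∀ v, v ≠ r → ∃! u, R u v) ∧
    (∀ v, Relation.ReflTransGen R r v)

/-- A type for φ: a Boolean-saturated subset of sub(φ). -/
def IsType (φ : Fml) (t : Finset Fml) : Prop :=
  t ⊆ φ.sub ∧
  (∀ ψ, Fml.neg ψ ∈ φ.sub → (Fml.neg ψ ∈ t ↔ ψ ∉ t)) ∧
  (∀ ψ χ, Fml.conj ψ χ ∈ φ.sub → (Fml.conj ψ χ ∈ t ↔ ψ ∈ t ∧ χ ∈ t))

/-- A quasistate for φ: a nonempty set of types with a multiplicity function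
`μ : T → {1,…,cpt(φ)+1}` satisfying ∃[≤c]-saturation. -/
structure IsQuasistate (φ : Fml) (T : Finset (Finset Fml)) (μ : Finset Fml → ℕ) : Prop where
  nonempty : T.Nonempty
  types : ∀ t ∈ T, IsType φ t
  mu_pos : ∀ t ∈ T, 1 ≤ μ t
  mu_le : ∀ t ∈ T, μ t ≤ φ.cpt + 1
  count : ∀ t ∈ T, ∀ c ξ, Fml.countLe c ξ ∈ φ.sub →
    (Fml.countLe c ξ ∈ t ↔ (T.filter (fun t' => ξ ∈ t')).sum μ ≤ c)

/-- `(W,≺,q,I,{r_i})` is a quasimodel for φ. -/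
structure IsQuasimodel (φ : Fml) {W I : Type} (prec : W → W → Prop) (root : W)
    (T : W → Finset (Finset Fml)) (μ : W → Finset Fml → ℕ)
    (r : I → W → Finset Fml) : Prop where
  tree : IsTreeOfDepth prec root φ.md
  qs : ∀ w, IsQuasistate φ (T w) (μ w)
  ine : Nonempty I
  run : ∀ i w, r i w ∈ T w
  witness : ∃ w t, t ∈ T w ∧ φ ∈ t
  coherence : ∀ i w v ξ, Fml.dia ξ ∈ φ.sub → prec w v → ξ ∈ r i v → Fml.dia ξ ∈ r i w
  saturation : ∀ i w ξ, Fml.dia ξ ∈ φ.sub → Fml.dia ξ ∈ r i w → ∃ v, prec w v ∧ ξ ∈ r i v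
  mult : ∀ w t, t ∈ T w → (μ w t : ℕ∞) = min {i : I | r i w = t}.encard ((φ.cpt : ℕ∞) + 1)

/-- Bundled quasimodels for φ. -/
structure Quasimodel (φ : Fml) where
  W : Type
  I : Type
  prec : W → W → Prop
  root : W
  T : W → Finset (Finset Fml)
  μ : W → Finset Fml → ℕ
  r : I → W → Finset Fml
  isQM : IsQuasimodel φ prec root T μ r


/-! ### Auxiliary lemmas about formulas -/

namespace Fml

lemma mem_sub_self (φ : Fml) : φ ∈ φ.sub := by
  cases φ <;> simp [sub]

lemma sub_trans : ∀ {φ ψ : Fml}, ψ ∈ φ.sub → ψ.sub ⊆ φ.sub := by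
  intro φ
  induction φ with
  | atom n => intro ψ h; simp [sub] at h; subst h; simp [sub]
  | neg χ ih =>
      intro ψ h
      rcases Finset.mem_insert.1 h with h | h
      · subst h; exact Finset.Subset.refl _
      · exact (ih h).trans (Finset.subset_insert _ _)
  | conj χ₁ χ₂ ih1 ih2 =>
      intro ψ h
      rcases Finset.mem_insert.1 h with h | h
      · subst h; exact Finset.Subset.refl _
      · rcases Finset.mem_union.1 h with h | h
        · exact (ih1 h).trans ((Finset.subset_union_left).trans (Finset.subset_insert _ _))
        · exact (ih2 h).trans ((Finset.subset_union_right).trans (Finset.subset_insert _ _))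
  | dia χ ih =>
      intro ψ h
      rcases Finset.mem_insert.1 h with h | h
      · subst h; exact Finset.Subset.refl _
      · exact (ih h).trans (Finset.subset_insert _ _)
  | countLe c χ ih =>
      intro ψ h
      rcases Finset.mem_insert.1 h with h | h
      · subst h; exact Finset.Subset.refl _
      · exact (ih h).trans (Finset.subset_insert _ _)

lemma mem_sub_of_dia {φ ξ : Fml} (h : Fml.dia ξ ∈ φ.sub) : ξ ∈ φ.sub :=
  sub_trans h (by simp [sub, mem_sub_self])

lemma one_le_len (φ : Fml) : 1 ≤ φ.len := by
  cases φ <;> simp [len]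

lemma sub_card_le_len (φ : Fml) : φ.sub.card ≤ φ.len := by
  induction φ with
  | atom n => simp [sub, len]
  | neg ψ ih => simp only [sub, len]; exact (Finset.card_insert_le _ _).trans (by omega)
  | conj ψ χ ih1 ih2 =>
      simp only [sub, len]
      refine (Finset.card_insert_le _ _).trans ?_
      have := Finset.card_union_le ψ.sub χ.sub
      omega
  | dia ψ ih => simp only [sub, len]; exact (Finset.card_insert_le _ _).trans (by omega)
  | countLe c ψ ih =>
      simp only [sub, len]
      refine (Finset.card_insert_le _ _).trans ?_
      omega

lemma md_le_len (φ : Fml) : φ.md ≤ φ.len := by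
  induction φ with
  | atom n => simp [md, len]
  | neg ψ ih => simp [md, len]; omega
  | conj ψ χ ih1 ih2 => simp [md, len]; omega
  | dia ψ ih => simp [md, len]; omega
  | countLe c ψ ih => simp [md, len]; omega

lemma cpt_lt_two_pow_len (φ : Fml) : φ.cpt < 2 ^ φ.len := by
  induction φ with
  | atom n => simp [cpt, len]
  | neg ψ ih =>
      simp only [cpt, len]
      exact lt_of_lt_of_le ih (Nat.pow_le_pow_right (by norm_num) (by omega))
  | conj ψ χ ih1 ih2 =>
      simp only [cpt, len, max_lt_iff]
      constructor
      · exact lt_of_lt_of_le ih1 (Nat.pow_le_pow_right (by norm_num) (by omega))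
      · exact lt_of_lt_of_le ih2 (Nat.pow_le_pow_right (by norm_num) (by omega))
  | dia ψ ih =>
      simp only [cpt, len]
      exact lt_of_lt_of_le ih (Nat.pow_le_pow_right (by norm_num) (by omega))
  | countLe c ψ ih =>
      simp only [cpt, len, max_lt_iff]
      constructor
      · exact lt_of_lt_of_le (Nat.lt_size_self c) (Nat.pow_le_pow_right (by norm_num) (by omega))
      · exact lt_of_lt_of_le ih (Nat.pow_le_pow_right (by norm_num) (by omega))

end Fml

/-! ### The small quasimodel construction -/

namespace SmallQM

open Set

noncomputable section
open Classical

/-- Bound on the number of types for `φ`. -/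
def JJ (φ : Fml) : ℕ := 2 ^ φ.sub.card

/-- Base of the size function. -/
def KK (φ : Fml) : ℕ := (φ.cpt + 2) * (JJ φ + 1)

/-- Required multiplicity at height `h`. -/
def FF (φ : Fml) (h : ℕ) : ℕ := KK φ ^ (h + 1)

lemma JJ_pos (φ : Fml) : 1 ≤ JJ φ := Nat.one_le_two_pow

lemma KK_ge (φ : Fml) : φ.cpt + 2 ≤ KK φ :=
  Nat.le_mul_of_pos_right _ (by have := JJ_pos φ; omega)

lemma FF_pos (φ : Fml) (h : ℕ) : 1 ≤ FF φ h :=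
  Nat.one_le_pow _ _ (by have := KK_ge φ; omega)

lemma cpt_lt_FF (φ : Fml) (h : ℕ) : φ.cpt + 1 < FF φ h := by
  have h1 : KK φ ≤ FF φ h := by
    have : KK φ ^ 1 ≤ KK φ ^ (h + 1) :=
      Nat.pow_le_pow_right (by have := KK_ge φ; omega) (by omega)
    simpa [FF] using this
  have := KK_ge φ
  omega

lemma FF_step (φ : Fml) (h : ℕ) : JJ φ * FF φ h + 1 ≤ FF φ (h + 1) := by
  have hK : JJ φ + 1 ≤ KK φ := by
    have h2 : 1 * (JJ φ + 1) ≤ (φ.cpt + 2) * (JJ φ + 1) :=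
      Nat.mul_le_mul_right _ (by omega)
    simpa [KK] using h2.trans_eq rfl
  calc JJ φ * FF φ h + 1 ≤ JJ φ * FF φ h + FF φ h := by have := FF_pos φ h; omega
    _ = (JJ φ + 1) * FF φ h := by ring
    _ ≤ KK φ * FF φ h := Nat.mul_le_mul_right _ hK
    _ = FF φ (h + 1) := by simp [FF, pow_succ]; ring

variable {φ : Fml} (Q : Quasimodel φ)

/-- The set of old runs whose value at `w` is `t`. -/
def col (w : Q.W) (t : Finset Fml) : Set Q.I := {i | Q.r i w = t}

lemma col_encard_pos {w : Q.W} {t : Finset Fml} (ht : t ∈ Q.T w) :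
    1 ≤ (col Q w t).encard := by
  have hmu := Q.isQM.mult w t ht
  have hpos := (Q.isQM.qs w).mu_pos t ht
  have h1 : (1 : ℕ∞) ≤ (Q.μ w t : ℕ∞) := by exact_mod_cast hpos
  rw [hmu] at h1
  exact h1.trans (min_le_left _ _)

lemma col_eq_empty {w : Q.W} {t : Finset Fml} (ht : t ∉ Q.T w) : col Q w t = ∅ := by
  ext i
  simp only [col, mem_setOf_eq, mem_empty_iff_false, iff_false]
  intro h
  exact ht (h ▸ Q.isQM.run i w)

lemma card_T_le (w : Q.W) : (Q.T w).card ≤ JJ φ := by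
  have hsub : Q.T w ⊆ φ.sub.powerset := by
    intro t ht
    exact Finset.mem_powerset.2 ((Q.isQM.qs w).types t ht).1
  calc (Q.T w).card ≤ φ.sub.powerset.card := Finset.card_le_card hsub
    _ = JJ φ := by simp [Finset.card_powerset, JJ]

/-- The depth function of the old tree. -/
def dep : Q.W → ℕ := Q.isQM.tree.choose

lemma dep_root : dep Q Q.root = 0 := Q.isQM.tree.choose_spec.1
lemma dep_le (w : Q.W) : dep Q w ≤ φ.md := Q.isQM.tree.choose_spec.2.1 w
lemma dep_succ {u v : Q.W} (h : Q.prec u v) : dep Q v = dep Q u + 1 :=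
  Q.isQM.tree.choose_spec.2.2.1 u v h
lemma reach (v : Q.W) : Relation.ReflTransGen Q.prec Q.root v :=
  Q.isQM.tree.choose_spec.2.2.2.2 v

/-- Choice of a "required" subset of a column, of size `min (col.encard) (FF φ h)`. -/
lemma exists_Req (w : Q.W) (h : ℕ) (t : Finset Fml) :
    ∃ R : Set Q.I, R ⊆ col Q w t ∧ R.encard = min ((col Q w t).encard) (FF φ h) := by
  obtain ⟨R, hR1, hR2⟩ := Set.exists_subset_encard_eq (min_le_left ((col Q w t).encard) (FF φ h))
  exact ⟨R, hR1, hR2⟩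

def Req (w : Q.W) (h : ℕ) (t : Finset Fml) : Set Q.I := (exists_Req Q w h t).choose

lemma Req_subset (w : Q.W) (h : ℕ) (t : Finset Fml) : Req Q w h t ⊆ col Q w t :=
  (exists_Req Q w h t).choose_spec.1

lemma Req_encard (w : Q.W) (h : ℕ) (t : Finset Fml) :
    (Req Q w h t).encard = min ((col Q w t).encard) (FF φ h) :=
  (exists_Req Q w h t).choose_spec.2

lemma Req_encard_le (w : Q.W) (h : ℕ) (t : Finset Fml) :
    (Req Q w h t).encard ≤ (FF φ h : ℕ∞) := by
  rw [Req_encard]; exact min_le_right _ _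

lemma Req_finite (w : Q.W) (h : ℕ) (t : Finset Fml) : (Req Q w h t).Finite := by
  rw [← Set.encard_lt_top_iff]
  exact lt_of_le_of_lt (Req_encard_le Q w h t) (by simp)

lemma encard_biUnion_le {β : Type*} (s : Finset β) (f : β → Set Q.I) (b : ℕ∞)
    (hb : ∀ x ∈ s, (f x).encard ≤ b) :
    (⋃ x ∈ (s : Set β), f x).encard ≤ s.card * b := by
  classical
  induction s using Finset.induction with
  | empty => simp
  | insert a s' hx ih =>
      have : (⋃ x ∈ ((insert a s' : Finset β) : Set β), f x) =
          f a ∪ ⋃ x ∈ (s' : Set β), f x := by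
        simp [Set.biUnion_insert]
      rw [this]
      refine (Set.encard_union_le _ _).trans ?_
      have h1 : (f a).encard ≤ b := hb a (Finset.mem_insert_self _ _)
      have h2 : (⋃ x ∈ (s' : Set β), f x).encard ≤ s'.card * b :=
        ih (fun x hxs => hb x (Finset.mem_insert_of_mem hxs))
      calc (f a).encard + (⋃ x ∈ (s' : Set β), f x).encard ≤ b + s'.card * b :=
            add_le_add h1 h2
        _ = ((s'.card + 1 : ℕ) : ℕ∞) * b := by push_cast; ring
        _ = (insert a s').card * b := by rw [Finset.card_insert_of_notMem hx]

/-- The index set of the new quasimodel: a selection of old runs at the root. -/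
def U : Set Q.I := ⋃ t ∈ ((Q.T Q.root : Finset (Finset Fml)) : Set (Finset Fml)),
  Req Q Q.root φ.md t

lemma U_encard : (U Q).encard ≤ ((JJ φ * FF φ φ.md : ℕ) : ℕ∞) := by
  refine (encard_biUnion_le Q (Q.T Q.root) _ (FF φ φ.md) ?_).trans ?_
  · intro t _; exact Req_encard_le Q Q.root φ.md t
  · have := card_T_le Q Q.root
    push_cast
    exact mul_le_mul' (by exact_mod_cast this) le_rfl

lemma U_finite : (U Q).Finite := by
  rw [← Set.encard_lt_top_iff]
  refine lt_of_le_of_lt (U_encard Q) ?_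
  exact_mod_cast WithTop.coe_lt_top (JJ φ * FF φ φ.md)

/-- The new index set. -/
abbrev Idx : Type := ↥(U Q)

instance : Finite (Idx Q) := (U_finite Q).to_subtype

instance : Nonempty (Idx Q) := by
  obtain ⟨t, ht⟩ := (Q.isQM.qs Q.root).nonempty
  have h1 : 1 ≤ (Req Q Q.root φ.md t).encard := by
    rw [Req_encard]
    exact le_min (col_encard_pos Q ht) (by exact_mod_cast FF_pos φ φ.md)
  obtain ⟨i, hi⟩ := Set.one_le_encard_iff_nonempty.1 h1
  exact ⟨⟨i, Set.mem_biUnion ht hi⟩⟩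

/-- The key invariant: `sel` is an injective selection of old runs realizing every
type of the quasistate at `w` with sufficient multiplicity. -/
def Good (w : Q.W) (sel : Idx Q → Q.I) (d : ℕ) : Prop :=
  dep Q w = d ∧ d ≤ φ.md ∧ Function.Injective sel ∧
  ∀ t ∈ Q.T w, min ((col Q w t).encard) ((FF φ (φ.md - d) : ℕ)) ≤
    {j : Idx Q | Q.r (sel j) w = t}.encard

lemma encard_preimage_le {α β : Type*} {f : α → β} (hf : Function.Injective f) (s : Set β) :
    (f ⁻¹' s).encard ≤ s.encard := by
  have h1 : (f '' (f ⁻¹' s)).encard = (f ⁻¹' s).encard := (hf.injOn).encard_image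
  rw [← h1]
  exact Set.encard_le_encard (Set.image_preimage_subset f s)

lemma le_encard_preimage {α β : Type*} {f : α → β} (hf : Function.Injective f) {s : Set β}
    (hs : s ⊆ Set.range f) : s.encard ≤ (f ⁻¹' s).encard := by
  have h1 : f '' (f ⁻¹' s) = s := Set.image_preimage_eq_of_subset hs
  calc s.encard = (f '' (f ⁻¹' s)).encard := by rw [h1]
    _ ≤ (f ⁻¹' s).encard := le_of_eq ((hf.injOn).encard_image)

lemma goodRoot : Good Q Q.root Subtype.val 0 := by
  refine ⟨dep_root Q, Nat.zero_le _, Subtype.val_injective, ?_⟩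
  intro t ht
  have hReqU : Req Q Q.root φ.md t ⊆ U Q := fun i hi => Set.mem_biUnion ht hi
  have hrange : Req Q Q.root φ.md t ⊆ Set.range (Subtype.val : Idx Q → Q.I) := by
    rw [Subtype.range_coe_subtype]
    exact hReqU
  have h1 : (Req Q Q.root φ.md t).encard ≤
      ((Subtype.val : Idx Q → Q.I) ⁻¹' (Req Q Q.root φ.md t)).encard :=
    le_encard_preimage Subtype.val_injective hrange
  have h2 : ((Subtype.val : Idx Q → Q.I) ⁻¹' (Req Q Q.root φ.md t)) ⊆
      {j : Idx Q | Q.r (j : Q.I) Q.root = t} := by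
    intro j hj
    exact Req_subset Q Q.root φ.md t hj
  have h3 := (Set.encard_le_encard h2)
  rw [Req_encard] at h1
  simpa [Nat.sub_zero] using h1.trans h3

lemma equiv_of_encard_eq {α β : Type*} {s : Set α} {t : Set β} (hs : s.Finite) (ht : t.Finite)
    (h : s.encard = t.encard) : Nonempty (↥s ≃ ↥t) := by
  haveI := hs.to_subtype
  haveI := ht.to_subtype
  rw [← Finite.card_eq, Nat.card_coe_set_eq, Nat.card_coe_set_eq]
  simp [Set.ncard_def, h]

lemma extend {w v : Q.W} {sel : Idx Q → Q.I} {d : ℕ} (g : Good Q w sel d)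
    (hedge : Q.prec w v) (j : Idx Q) :
    ∃ sel' : Idx Q → Q.I, (∀ j', Q.r (sel' j') w = Q.r (sel j') w) ∧ sel' j = sel j ∧
      Good Q v sel' (d + 1) := by
  obtain ⟨hdep, hdm, hinj, hcnt⟩ := g
  have hdv : dep Q v = d + 1 := by rw [dep_succ Q hedge, hdep]
  have hd1m : d + 1 ≤ φ.md := hdv ▸ dep_le Q v
  set h := φ.md - (d + 1) with hh
  have hmd : φ.md - d = h + 1 := by omega
  -- the set of mandatory old runs
  set D : Set Q.I :=
    (⋃ s ∈ ((Q.T v : Finset (Finset Fml)) : Set (Finset Fml)), Req Q v h s) ∪ {sel j} with hD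
  have hDenc : D.encard ≤ ((FF φ (φ.md - d) : ℕ) : ℕ∞) := by
    refine (Set.encard_union_le _ _).trans ?_
    have h1 : (⋃ s ∈ ((Q.T v : Finset (Finset Fml)) : Set (Finset Fml)), Req Q v h s).encard
        ≤ ((Q.T v).card : ℕ∞) * ((FF φ h : ℕ) : ℕ∞) :=
      encard_biUnion_le Q _ _ _ (fun s _ => Req_encard_le Q v h s)
    have h2 : ((Q.T v).card : ℕ∞) * ((FF φ h : ℕ) : ℕ∞) ≤ ((JJ φ * FF φ h : ℕ) : ℕ∞) := by
      push_cast
      exact mul_le_mul' (by exact_mod_cast card_T_le Q v) le_rfl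
    have h3 : ((JJ φ * FF φ h : ℕ) : ℕ∞) + 1 ≤ ((FF φ (φ.md - d) : ℕ) : ℕ∞) := by
      rw [hmd]
      exact_mod_cast FF_step φ h
    calc _ ≤ ((JJ φ * FF φ h : ℕ) : ℕ∞) + 1 := by
          simpa using add_le_add (h1.trans h2) (le_of_eq (Set.encard_singleton (sel j)))
      _ ≤ _ := h3
  -- choose per-row selections
  have hex : ∀ t : Finset Fml, ∃ S : Set Q.I,
      (D ∩ col Q w t) ⊆ S ∧ S ⊆ col Q w t ∧
      S.encard = {j' : Idx Q | Q.r (sel j') w = t}.encard := by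
    intro t
    by_cases ht : t ∈ Q.T w
    · have hpre : {j' : Idx Q | Q.r (sel j') w = t} = sel ⁻¹' (col Q w t) := rfl
      have hNle : {j' : Idx Q | Q.r (sel j') w = t}.encard ≤ (col Q w t).encard := by
        rw [hpre]; exact encard_preimage_le hinj _
      have hNge : min ((col Q w t).encard) ((FF φ (φ.md - d) : ℕ)) ≤
          {j' : Idx Q | Q.r (sel j') w = t}.encard := hcnt t ht
      have hDcap : (D ∩ col Q w t).encard ≤ {j' : Idx Q | Q.r (sel j') w = t}.encard := by
        refine le_trans (le_min ?_ ?_) hNge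
        · exact Set.encard_le_encard Set.inter_subset_right
        · exact (Set.encard_le_encard Set.inter_subset_left).trans hDenc
      have hdiff : {j' : Idx Q | Q.r (sel j') w = t}.encard - (D ∩ col Q w t).encard ≤
          (col Q w t \ D).encard := by
        have h1 : (col Q w t \ D).encard + (col Q w t ∩ D).encard = (col Q w t).encard :=
          Set.encard_diff_add_encard_inter _ _
        have h2 : {j' : Idx Q | Q.r (sel j') w = t}.encard ≤
            (col Q w t \ D).encard + (D ∩ col Q w t).encard := by
          rw [Set.inter_comm D, h1]; exact hNle
        exact tsub_le_iff_right.2 h2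
      obtain ⟨E, hE1, hE2⟩ := Set.exists_subset_encard_eq hdiff
      refine ⟨(D ∩ col Q w t) ∪ E, Set.subset_union_left, ?_, ?_⟩
      · exact Set.union_subset Set.inter_subset_right (hE1.trans Set.diff_subset)
      · have hdisj : Disjoint (D ∩ col Q w t) E := by
          refine Set.disjoint_left.2 ?_
          intro x hx hxE
          exact ((hE1 hxE).2) hx.1
        rw [Set.encard_union_eq hdisj, hE2, add_tsub_cancel_of_le hDcap]
    · refine ⟨∅, ?_, by simp, ?_⟩
      · rw [col_eq_empty Q ht]; simp
      · have hN : {j' : Idx Q | Q.r (sel j') w = t} = ∅ := by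
          ext j'; simp only [mem_setOf_eq, mem_empty_iff_false, iff_false]
          intro hq; exact ht (hq ▸ Q.isQM.run (sel j') w)
        rw [hN]; simp
  set SS : Finset Fml → Set Q.I := fun t => (hex t).choose with hSS
  have hSD : ∀ t, (D ∩ col Q w t) ⊆ SS t := fun t => (hex t).choose_spec.1
  have hSsub : ∀ t, SS t ⊆ col Q w t := fun t => (hex t).choose_spec.2.1
  have hSenc : ∀ t, (SS t).encard = {j' : Idx Q | Q.r (sel j') w = t}.encard :=
    fun t => (hex t).choose_spec.2.2
  have hSfin : ∀ t, (SS t).Finite := by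
    intro t
    rw [← Set.encard_lt_top_iff, hSenc]
    exact Set.encard_lt_top_iff.2 (Set.toFinite _)
  -- the designated row
  set t₀ := Q.r (sel j) w with ht₀def
  have hjS : sel j ∈ SS t₀ := hSD t₀ ⟨Or.inr rfl, rfl⟩
  have hjN : j ∈ {j' : Idx Q | Q.r (sel j') w = t₀} := rfl
  -- the adjusted equivalence on the designated row
  have hd0 : ({j' : Idx Q | Q.r (sel j') w = t₀} \ {j}).encard =
      (SS t₀ \ {sel j}).encard := by
    rw [Set.encard_diff_singleton_of_mem hjN, Set.encard_diff_singleton_of_mem hjS, hSenc]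
  obtain ⟨e₀⟩ := equiv_of_encard_eq (Set.toFinite _) ((hSfin t₀).subset Set.diff_subset) hd0
  have e : ∀ t : Finset Fml, ↥{j' : Idx Q | Q.r (sel j') w = t} ≃ ↥(SS t) :=
    fun t => (equiv_of_encard_eq (Set.toFinite _) (hSfin t) (hSenc t).symm).some
  -- definition of the new selection
  set sel' : Idx Q → Q.I := fun j' =>
    if hj : j' = j then sel j
    else if ht : Q.r (sel j') w = t₀ then
      (e₀ ⟨j', ⟨ht, by simpa using hj⟩⟩ : Q.I)
    else (e (Q.r (sel j') w) ⟨j', rfl⟩ : Q.I) with hsel'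
  have hselj : sel' j = sel j := by simp only [hsel', dif_pos rfl]
  have val_t0 : ∀ (a : Idx Q) (hja : ¬ a = j) (hta : Q.r (sel a) w = t₀),
      sel' a = (e₀ ⟨a, ⟨hta, by simpa using hja⟩⟩ : Q.I) := by
    intro a hja hta
    simp only [hsel', dif_neg hja, dif_pos hta]
  have val_e : ∀ (a : Idx Q) (hja : ¬ a = j) (hta : ¬ Q.r (sel a) w = t₀),
      sel' a = (e (Q.r (sel a) w) ⟨a, rfl⟩ : Q.I) := by
    intro a hja hta
    simp only [hsel', dif_neg hja, dif_neg hta]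
  have ecast : ∀ (a : Idx Q) (t : Finset Fml) (hat : Q.r (sel a) w = t),
      ((e (Q.r (sel a) w) ⟨a, rfl⟩ : ↥(SS (Q.r (sel a) w))) : Q.I) =
      ((e t ⟨a, hat⟩ : ↥(SS t)) : Q.I) := by
    intro a t hat
    cases hat
    rfl
  -- location of values
  have hloc : ∀ a : Idx Q, sel' a ∈ SS (Q.r (sel a) w) := by
    intro a
    by_cases hja : a = j
    · subst hja
      rw [hselj, ← ht₀def]
      exact hjS
    · by_cases hta : Q.r (sel a) w = t₀
      · rw [val_t0 a hja hta, hta]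
        exact ((e₀ ⟨a, ⟨hta, by simpa using hja⟩⟩).2).1
      · rw [val_e a hja hta]
        exact (e (Q.r (sel a) w) ⟨a, rfl⟩).2
  have htype : ∀ a : Idx Q, Q.r (sel' a) w = Q.r (sel a) w :=
    fun a => hSsub _ (hloc a)
  -- injectivity
  have hinj' : Function.Injective sel' := by
    intro a b hab
    have hteq : Q.r (sel a) w = Q.r (sel b) w := by
      rw [← htype a, ← htype b, hab]
    by_cases hja : a = j <;> by_cases hjb : b = j
    · rw [hja, hjb]
    · exfalso
      subst hja
      have htb : Q.r (sel b) w = t₀ := by rw [← hteq, ← ht₀def]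
      have hb := val_t0 b hjb htb
      rw [hselj, hb] at hab
      exact ((e₀ ⟨b, ⟨htb, by simpa using hjb⟩⟩).2).2 (by simpa using hab.symm)
    · exfalso
      subst hjb
      have hta : Q.r (sel a) w = t₀ := by rw [hteq, ← ht₀def]
      have ha := val_t0 a hja hta
      rw [hselj, ha] at hab
      exact ((e₀ ⟨a, ⟨hta, by simpa using hja⟩⟩).2).2 (by simpa using hab)
    · by_cases hta : Q.r (sel a) w = t₀
      · have htb : Q.r (sel b) w = t₀ := by rw [← hteq]; exact hta
        rw [val_t0 a hja hta, val_t0 b hjb htb] at hab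
        have := e₀.injective (Subtype.ext hab)
        exact congrArg Subtype.val this
      · have htb : ¬ Q.r (sel b) w = t₀ := by rw [← hteq]; exact hta
        rw [val_e a hja hta, val_e b hjb htb, ecast b (Q.r (sel a) w) hteq.symm] at hab
        have := (e (Q.r (sel a) w)).injective (Subtype.ext hab)
        exact congrArg Subtype.val this
  -- coverage of the chosen sets
  have hcover : ∀ t : Finset Fml, SS t ⊆ Set.range sel' := by
    intro t k hk
    have hkt : Q.r k w = t := hSsub t hk
    by_cases hkj : k = sel j
    · exact ⟨j, by rw [hselj, hkj]⟩
    · by_cases ht0 : t = t₀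
      · subst ht0
        have hkS₀ : k ∈ SS t₀ \ {sel j} := ⟨hk, by simpa using hkj⟩
        set x := e₀.symm ⟨k, hkS₀⟩ with hx
        have hxt : Q.r (sel (x : Idx Q)) w = t₀ := x.2.1
        have hxj : ¬ (x : Idx Q) = j := by simpa using x.2.2
        refine ⟨(x : Idx Q), ?_⟩
        calc sel' (x : Idx Q) = (e₀ ⟨(x : Idx Q), ⟨hxt, by simpa using hxj⟩⟩ : Q.I) :=
              val_t0 _ hxj hxt
          _ = (e₀ x : Q.I) := congrArg (fun y => (e₀ y : Q.I)) (Subtype.ext rfl)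
          _ = k := by rw [hx, Equiv.apply_symm_apply]
      · set x := (e t).symm ⟨k, hk⟩ with hx
        have hxmem : Q.r (sel (x : Idx Q)) w = t := x.2
        have hxj : ¬ (x : Idx Q) = j := by
          intro hxyj
          apply ht0
          rw [← hxmem, hxyj, ← ht₀def]
        have hxt0 : ¬ Q.r (sel (x : Idx Q)) w = t₀ := by rw [hxmem]; exact ht0
        refine ⟨(x : Idx Q), ?_⟩
        calc sel' (x : Idx Q) = (e (Q.r (sel (x : Idx Q)) w) ⟨(x : Idx Q), rfl⟩ : Q.I) :=
              val_e _ hxj hxt0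
          _ = (e t ⟨(x : Idx Q), hxmem⟩ : Q.I) := ecast _ t hxmem
          _ = (e t x : Q.I) := congrArg (fun y => (e t y : Q.I)) (Subtype.ext rfl)
          _ = k := by rw [hx, Equiv.apply_symm_apply]
  -- conclusion
  refine ⟨sel', htype, hselj, hdv, hd1m, hinj', ?_⟩
  intro s hs
  have hReqD : Req Q v h s ⊆ D := fun k hk =>
    Or.inl (Set.mem_biUnion (Finset.mem_coe.2 hs) hk)
  have hReqrange : Req Q v h s ⊆ Set.range sel' := by
    intro k hk
    have hmem : k ∈ D ∩ col Q w (Q.r k w) := ⟨hReqD hk, rfl⟩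
    exact hcover _ (hSD _ hmem)
  have h1 : (Req Q v h s).encard ≤ (sel' ⁻¹' (Req Q v h s)).encard :=
    le_encard_preimage hinj' hReqrange
  have h2 : sel' ⁻¹' (Req Q v h s) ⊆ {j' : Idx Q | Q.r (sel' j') v = s} := by
    intro j' hj'
    exact Req_subset Q v h s hj'
  rw [Req_encard] at h1
  rw [← hh]
  exact h1.trans (Set.encard_le_encard h2)

/-- Extract a finite chain from reflexive–transitive reachability. -/
lemma exists_chain {α : Type*} {R : α → α → Prop} {a b : α} (hab : Relation.ReflTransGen R a b) :
    ∃ (p : ℕ) (u : ℕ → α), u 0 = a ∧ u p = b ∧ ∀ i < p, R (u i) (u (i + 1)) := by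
  induction hab with
  | refl => exact ⟨0, fun _ => a, rfl, rfl, by omega⟩
  | @tail x y hab hbc ih =>
      obtain ⟨p, u, h0, hp, hs⟩ := ih
      refine ⟨p + 1, fun i => if i ≤ p then u i else y, by simp [h0], by simp, ?_⟩
      intro i hi
      by_cases hip : i < p
      · have h1 : i ≤ p := le_of_lt hip
        have h2 : i + 1 ≤ p := hip
        simpa [h1, h2] using hs i hip
      · have h1 : i = p := by omega
        subst h1
        simpa [hp] using hbc

/-- The witness world of the old quasimodel. -/
def wit : Q.W := Q.isQM.witness.choose

lemma wit_spec : ∃ t, t ∈ Q.T (wit Q) ∧ φ ∈ t := Q.isQM.witness.choose_spec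

/-- Length of the spine. -/
def P : ℕ := (exists_chain (reach Q (wit Q))).choose

/-- The spine: a path from the root to the witness world. -/
def uu : ℕ → Q.W := (exists_chain (reach Q (wit Q))).choose_spec.choose

lemma uu_zero : uu Q 0 = Q.root := (exists_chain (reach Q (wit Q))).choose_spec.choose_spec.1
lemma uu_P : uu Q (P Q) = wit Q := (exists_chain (reach Q (wit Q))).choose_spec.choose_spec.2.1
lemma uu_step : ∀ i < P Q, Q.prec (uu Q i) (uu Q (i + 1)) :=
  (exists_chain (reach Q (wit Q))).choose_spec.choose_spec.2.2

/-- Nodes of the new tree: an old world together with a selection of old runs. -/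
structure Node where
  what : Q.W
  sel : Idx Q → Q.I
  d : ℕ
  good : Good Q what sel d

/-- Steps (edge labels) of the new tree. -/
def Step : Type := (Idx Q × {ψ : Fml // ψ ∈ φ.sub}) ⊕ Unit

instance : Finite (Step Q) := by
  unfold Step
  infer_instance

/-- Condition under which a step is allowed. -/
def Cond (nd : Node Q) (c : Step Q) : Prop :=
  match c with
  | Sum.inl (j, ξ) => Fml.dia ξ.1 ∈ φ.sub ∧ Fml.dia ξ.1 ∈ Q.r (nd.sel j) nd.what
  | Sum.inr _ => nd.d < P Q ∧ nd.what = uu Q nd.d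

/-- Specification of the result of a step. -/
def Spec (nd : Node Q) (c : Step Q) (nd' : Node Q) : Prop :=
  Q.prec nd.what nd'.what ∧ nd'.d = nd.d + 1 ∧
  (∀ j', Q.r (nd'.sel j') nd.what = Q.r (nd.sel j') nd.what) ∧
  (match c with
   | Sum.inl (j, ξ) => ξ.1 ∈ Q.r (nd'.sel j) nd'.what
   | Sum.inr _ => nd'.what = uu Q (nd.d + 1))

lemma step_exists (nd : Node Q) (c : Step Q) (hc : Cond Q nd c) :
    ∃ nd', Spec Q nd c nd' := by
  cases c with
  | inl jc =>
      obtain ⟨j, ξ⟩ := jc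
      obtain ⟨hc1, hc2⟩ := hc
      obtain ⟨v, hedge, hξ⟩ := Q.isQM.saturation (nd.sel j) nd.what ξ.1 hc1 hc2
      obtain ⟨sel', hA, hB, hG⟩ := extend Q nd.good hedge j
      refine ⟨⟨v, sel', nd.d + 1, hG⟩, hedge, rfl, hA, ?_⟩
      show ξ.1 ∈ Q.r (sel' j) v
      rw [hB]
      exact hξ
  | inr _ =>
      obtain ⟨hc1, hc2⟩ := hc
      have hedge : Q.prec nd.what (uu Q (nd.d + 1)) := by
        rw [hc2]
        exact uu_step Q nd.d hc1
      obtain ⟨j⟩ := (inferInstance : Nonempty (Idx Q))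
      obtain ⟨sel', hA, _, hG⟩ := extend Q nd.good hedge j
      exact ⟨⟨uu Q (nd.d + 1), sel', nd.d + 1, hG⟩, hedge, rfl, hA, rfl⟩

/-- One step of the decoding function. -/
def stepf (nd : Node Q) (c : Step Q) : Option (Node Q) :=
  if hc : Cond Q nd c then some (step_exists Q nd c hc).choose else none

lemma stepf_some {nd : Node Q} {c : Step Q} {nd' : Node Q} (hs : stepf Q nd c = some nd') :
    Spec Q nd c nd' := by
  unfold stepf at hs
  split at hs
  next hc => cases hs; exact (step_exists Q _ _ hc).choose_spec
  next => cases hs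

lemma stepf_isSome {nd : Node Q} {c : Step Q} (hc : Cond Q nd c) :
    (stepf Q nd c).isSome := by
  unfold stepf
  rw [dif_pos hc]
  rfl

/-- The root node. -/
def rootNode : Node Q := ⟨Q.root, Subtype.val, 0, goodRoot Q⟩

/-- Decoding lists of steps (in reverse order: head = last step) into nodes. -/
def decode : List (Step Q) → Option (Node Q)
  | [] => some (rootNode Q)
  | c :: l => (decode l).bind fun nd => stepf Q nd c

lemma decode_cons {c : Step Q} {l : List (Step Q)} {nd' : Node Q}
    (hd : decode Q (c :: l) = some nd') :
    ∃ nd, decode Q l = some nd ∧ stepf Q nd c = some nd' := by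
  have := hd
  rw [decode] at this
  exact Option.bind_eq_some_iff.1 this

lemma decode_d : ∀ {l : List (Step Q)} {nd : Node Q}, decode Q l = some nd → nd.d = l.length := by
  intro l
  induction l with
  | nil =>
      intro nd hd
      rw [decode] at hd
      cases hd
      rfl
  | cons c l ih =>
      intro nd hd
      obtain ⟨nd₁, hd₁, hstep⟩ := decode_cons Q hd
      have hspec := stepf_some Q hstep
      rw [List.length_cons, ← ih hd₁]
      exact hspec.2.1

/-- Worlds of the new quasimodel: lists of steps that decode successfully. -/
def NW : Type := {l : List (Step Q) // (decode Q l).isSome}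

def nodeOf (w : NW Q) : Node Q := (decode Q w.1).get w.2

lemma nodeOf_spec (w : NW Q) : decode Q w.1 = some (nodeOf Q w) := by
  unfold nodeOf
  obtain ⟨nd, hnd⟩ := Option.isSome_iff_exists.1 w.2
  simp [hnd]

def nroot : NW Q := ⟨[], by rw [decode]; rfl⟩

def nprec (w v : NW Q) : Prop := ∃ c, v.1 = c :: w.1

lemma isSome_of_cons {c : Step Q} {l : List (Step Q)} (h : (decode Q (c :: l)).isSome) :
    (decode Q l).isSome := by
  rw [decode] at h
  cases hld : decode Q l with
  | none => rw [hld] at h; simp at h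
  | some nd => simp

lemma nprec_spec' {w v : NW Q} (c : Step Q) (hc : v.1 = c :: w.1) :
    Spec Q (nodeOf Q w) c (nodeOf Q v) := by
  have hv := nodeOf_spec Q v
  rw [hc] at hv
  obtain ⟨nd, hnd, hstep⟩ := decode_cons Q hv
  have h2 : nd = nodeOf Q w := (Option.some.inj ((nodeOf_spec Q w).symm.trans hnd)).symm
  subst h2
  exact stepf_some Q hstep

lemma nprec_spec {w v : NW Q} (h : nprec Q w v) :
    ∃ c, Spec Q (nodeOf Q w) c (nodeOf Q v) := by
  obtain ⟨c, hc⟩ := h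
  exact ⟨c, nprec_spec' Q c hc⟩

lemma nlen_le (w : NW Q) : w.1.length ≤ φ.md := by
  obtain ⟨_, h2, _⟩ := (nodeOf Q w).good
  have hd := decode_d Q (nodeOf_spec Q w)
  omega

lemma ntree : IsTreeOfDepth (nprec Q) (nroot Q) φ.md := by
  refine ⟨fun w => w.1.length, rfl, nlen_le Q, ?_, ?_, ?_⟩
  · intro u v huv
    obtain ⟨c, hc⟩ := huv
    show (v.1).length = (u.1).length + 1
    rw [hc]
    simp
  · intro v hv
    have hne : v.1 ≠ [] := fun h => hv (Subtype.ext h)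
    obtain ⟨c, l, hcl⟩ : ∃ c l, v.1 = c :: l := by
      cases hvl : v.1 with
      | nil => exact absurd hvl hne
      | cons c l => exact ⟨c, l, rfl⟩
    have hv2 := v.2
    rw [hcl] at hv2
    have hl : (decode Q l).isSome := isSome_of_cons Q hv2
    refine ⟨⟨l, hl⟩, ⟨c, hcl⟩, ?_⟩
    intro u hu
    obtain ⟨c', hc'⟩ := hu
    apply Subtype.ext
    have h3 : c :: l = c' :: u.1 := by rw [← hc', ← hcl]
    exact (List.cons.injEq _ _ _ _ ▸ h3).2.symm
  · intro v
    have key : ∀ (l : List (Step Q)) (hl : (decode Q l).isSome),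
        Relation.ReflTransGen (nprec Q) (nroot Q) ⟨l, hl⟩ := by
      intro l
      induction l with
      | nil => intro hl; exact Relation.ReflTransGen.refl
      | cons c l ih =>
          intro hl
          have hl' : (decode Q l).isSome := isSome_of_cons Q hl
          exact Relation.ReflTransGen.tail (ih hl') ⟨c, rfl⟩
    obtain ⟨l, hl⟩ := v
    exact key l hl

lemma spine_node : ∀ i, i ≤ P Q → ∃ nd : Node Q,
    decode Q (List.replicate i (Sum.inr () : Step Q)) = some nd ∧ nd.what = uu Q i := by
  intro i
  induction i with
  | zero =>
      intro _
      exact ⟨rootNode Q, rfl, (uu_zero Q).symm⟩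
  | succ i ih =>
      intro hiP
      obtain ⟨nd, hnd, hwhat⟩ := ih (by omega)
      have hd : nd.d = i := by rw [decode_d Q hnd]; exact List.length_replicate
      have hcond : Cond Q nd (Sum.inr ()) := by
        refine ⟨by omega, ?_⟩
        rw [hd, hwhat]
      obtain ⟨nd', hnd'⟩ := Option.isSome_iff_exists.1 (stepf_isSome Q hcond)
      have hspec := stepf_some Q hnd'
      refine ⟨nd', ?_, ?_⟩
      · have hrep : decode Q (List.replicate (i + 1) (Sum.inr () : Step Q)) =
            (decode Q (List.replicate i (Sum.inr () : Step Q))).bind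
              (fun nd => stepf Q nd (Sum.inr ())) := rfl
        exact hrep.trans ((congrArg (fun o => Option.bind o
          (fun nd => stepf Q nd (Sum.inr ()))) hnd).trans hnd')
      · have h4 : nd'.what = uu Q (nd.d + 1) := hspec.2.2.2
        rw [h4, hd]

lemma nwitness : ∃ (w : NW Q) (t : Finset Fml), t ∈ Q.T (nodeOf Q w).what ∧ φ ∈ t := by
  obtain ⟨nd, hnd, hwhat⟩ := spine_node Q (P Q) le_rfl
  have hl : (decode Q (List.replicate (P Q) (Sum.inr () : Step Q))).isSome := by
    rw [hnd]; rfl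
  refine ⟨(⟨_, hl⟩ : NW Q), ?_⟩
  have heq : nodeOf Q (⟨_, hl⟩ : NW Q) = nd :=
    Option.some.inj ((nodeOf_spec Q (⟨_, hl⟩ : NW Q)).symm.trans hnd)
  rw [heq, hwhat, uu_P]
  exact wit_spec Q

lemma ncoh : ∀ (i : Idx Q) (w v : NW Q) (ξ : Fml), Fml.dia ξ ∈ φ.sub → nprec Q w v →
    ξ ∈ Q.r ((nodeOf Q v).sel i) (nodeOf Q v).what →
    Fml.dia ξ ∈ Q.r ((nodeOf Q w).sel i) (nodeOf Q w).what := by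
  intro i w v ξ hsub hwv hmem
  obtain ⟨c, hspec⟩ := nprec_spec Q hwv
  have h1 : Fml.dia ξ ∈ Q.r ((nodeOf Q v).sel i) (nodeOf Q w).what :=
    Q.isQM.coherence _ _ _ _ hsub hspec.1 hmem
  rw [hspec.2.2.1 i] at h1
  exact h1

lemma nsat : ∀ (i : Idx Q) (w : NW Q) (ξ : Fml), Fml.dia ξ ∈ φ.sub →
    Fml.dia ξ ∈ Q.r ((nodeOf Q w).sel i) (nodeOf Q w).what →
    ∃ v : NW Q, nprec Q w v ∧ ξ ∈ Q.r ((nodeOf Q v).sel i) (nodeOf Q v).what := by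
  intro i w ξ hsub hdia
  have hξs : ξ ∈ φ.sub := Fml.mem_sub_of_dia hsub
  have hcond : Cond Q (nodeOf Q w) (Sum.inl (i, ⟨ξ, hξs⟩)) := ⟨hsub, hdia⟩
  have hsome : (decode Q ((Sum.inl (i, ⟨ξ, hξs⟩) : Step Q) :: w.1)).isSome := by
    show ((decode Q w.1).bind fun nd => stepf Q nd (Sum.inl (i, ⟨ξ, hξs⟩))).isSome
    rw [nodeOf_spec Q w]
    exact stepf_isSome Q hcond
  refine ⟨⟨(Sum.inl (i, ⟨ξ, hξs⟩) : Step Q) :: w.1, hsome⟩, ⟨_, rfl⟩, ?_⟩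
  have hspec := nprec_spec' Q (w := w)
    (v := ⟨(Sum.inl (i, ⟨ξ, hξs⟩) : Step Q) :: w.1, hsome⟩) (Sum.inl (i, ⟨ξ, hξs⟩)) rfl
  exact hspec.2.2.2

lemma nmult : ∀ (w : NW Q) (t : Finset Fml), t ∈ Q.T (nodeOf Q w).what →
    ((Q.μ (nodeOf Q w).what t : ℕ∞)) =
      min {j : Idx Q | Q.r ((nodeOf Q w).sel j) (nodeOf Q w).what = t}.encard
        ((φ.cpt : ℕ∞) + 1) := by
  intro w t ht
  set nd := nodeOf Q w with hnd
  have hold := Q.isQM.mult nd.what t ht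
  obtain ⟨_, _, hinj, hcnt⟩ := nd.good
  have hup : {j : Idx Q | Q.r (nd.sel j) nd.what = t}.encard ≤ (col Q nd.what t).encard :=
    encard_preimage_le hinj _
  have hlo := hcnt t ht
  have hCF : ((φ.cpt : ℕ∞) + 1) ≤ ((FF φ (φ.md - nd.d) : ℕ) : ℕ∞) := by
    have h5 := cpt_lt_FF φ (φ.md - nd.d)
    have h6 : φ.cpt + 1 ≤ FF φ (φ.md - nd.d) := by omega
    exact_mod_cast h6
  have hmin : min {j : Idx Q | Q.r (nd.sel j) nd.what = t}.encard ((φ.cpt : ℕ∞) + 1)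
      = min ((col Q nd.what t).encard) ((φ.cpt : ℕ∞) + 1) := by
    apply le_antisymm
    · exact min_le_min hup le_rfl
    · exact le_min ((min_le_min le_rfl hCF).trans hlo) (min_le_right _ _)
  rw [hold]
  exact hmin.symm

/-- The small quasimodel. -/
def smallQM : Quasimodel φ where
  W := NW Q
  I := Idx Q
  prec := nprec Q
  root := nroot Q
  T := fun w => Q.T (nodeOf Q w).what
  μ := fun w => Q.μ (nodeOf Q w).what
  r := fun j w => Q.r ((nodeOf Q w).sel j) (nodeOf Q w).what
  isQM :=
    { tree := ntree Q
      qs := fun w => Q.isQM.qs (nodeOf Q w).what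
      ine := inferInstance
      run := fun i w => Q.isQM.run ((nodeOf Q w).sel i) (nodeOf Q w).what
      witness := nwitness Q
      coherence := ncoh Q
      saturation := nsat Q
      mult := nmult Q }

/-! ### Cardinality bounds -/

lemma card_Idx_le : Nat.card (Idx Q) ≤ JJ φ * FF φ φ.md := by
  have h1 : Nat.card (Idx Q) = (U Q).ncard := Nat.card_coe_set_eq _
  obtain ⟨hfin, n₀, hn₀, hle⟩ := Set.encard_le_coe_iff.1 (U_encard Q)
  rw [h1, Set.ncard_def, hn₀]
  simpa using hle

instance optionFinite {β : Type u} [Finite β] : Finite (Option β) :=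
  Finite.of_equiv _ (Equiv.optionEquivSumPUnit.{0, u} β).symm

def enc (w : NW Q) : Fin (φ.md + 1) → Option (Step Q) := fun i => w.1[(i : ℕ)]?

lemma enc_inj : Function.Injective (enc Q) := by
  intro w₁ w₂ h
  apply Subtype.ext
  apply List.ext_getElem?
  intro n
  by_cases hn : n < φ.md + 1
  · exact congrFun h ⟨n, hn⟩
  · have h1 : w₁.1[n]? = none := List.getElem?_eq_none (by have := nlen_le Q w₁; omega)
    have h2 : w₂.1[n]? = none := List.getElem?_eq_none (by have := nlen_le Q w₂; omega)
    rw [h1, h2]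

instance : Finite (NW Q) := Finite.of_injective _ (enc_inj Q)

lemma card_Step_le : Nat.card (Step Q) ≤ Nat.card (Idx Q) * φ.len + 1 := by
  have h0 : Nat.card (Step Q) =
      Nat.card (Idx Q) * Nat.card {ψ : Fml // ψ ∈ φ.sub} + Nat.card Unit := by
    unfold Step
    rw [Nat.card_sum, Nat.card_prod]
  have h1 : Nat.card {ψ : Fml // ψ ∈ φ.sub} = φ.sub.card := by
    rw [Nat.card_eq_fintype_card, Fintype.card_coe]
  have h2 : Nat.card Unit = 1 := Nat.card_unique
  rw [h0, h1, h2]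
  have := Fml.sub_card_le_len φ
  exact Nat.add_le_add_right (Nat.mul_le_mul_left _ this) 1

lemma card_NW_le : Nat.card (NW Q) ≤ (Nat.card (Step Q) + 1) ^ (φ.md + 1) := by
  have h1 : Nat.card (NW Q) ≤ Nat.card (Fin (φ.md + 1) → Option (Step Q)) :=
    Nat.card_le_card_of_injective _ (enc_inj Q)
  have h2 : Nat.card (Fin (φ.md + 1) → Option (Step Q)) =
      Nat.card (Option (Step Q)) ^ (φ.md + 1) := by
    rw [Nat.card_fun, Nat.card_eq_fintype_card (α := Fin (φ.md + 1)), Fintype.card_fin]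
  have h3 : Nat.card (Option (Step Q)) = Nat.card (Step Q) + 1 := by
    rw [Nat.card_congr (Equiv.optionEquivSumPUnit.{0, 0} (Step Q)), Nat.card_sum]
    simp
  rw [h2, h3] at h1
  exact h1

/-! ### Numeric estimates -/

lemma numeric_KK (φ : Fml) : KK φ ≤ 2 ^ (2 * φ.len + 2) := by
  have hC := Fml.cpt_lt_two_pow_len φ
  have hs := Fml.sub_card_le_len φ
  have hJ : JJ φ ≤ 2 ^ φ.len := Nat.pow_le_pow_right (by norm_num) hs
  have h1 : φ.cpt + 2 ≤ 2 ^ (φ.len + 1) := by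
    have : 2 ^ φ.len + 1 ≤ 2 ^ (φ.len + 1) := by
      have h2 : 1 ≤ 2 ^ φ.len := Nat.one_le_two_pow
      calc 2 ^ φ.len + 1 ≤ 2 ^ φ.len + 2 ^ φ.len := by omega
        _ = 2 ^ (φ.len + 1) := by ring
    omega
  have h2 : JJ φ + 1 ≤ 2 ^ (φ.len + 1) := by
    have h3 : 1 ≤ 2 ^ φ.len := Nat.one_le_two_pow
    have : 2 ^ φ.len + 1 ≤ 2 ^ (φ.len + 1) := by
      calc 2 ^ φ.len + 1 ≤ 2 ^ φ.len + 2 ^ φ.len := by omega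
        _ = 2 ^ (φ.len + 1) := by ring
    omega
  calc KK φ = (φ.cpt + 2) * (JJ φ + 1) := rfl
    _ ≤ 2 ^ (φ.len + 1) * 2 ^ (φ.len + 1) := Nat.mul_le_mul h1 h2
    _ = 2 ^ (2 * φ.len + 2) := by rw [← pow_add]; ring_nf

lemma numeric_Idx (φ : Fml) : JJ φ * FF φ φ.md ≤ 2 ^ ((φ.len + 2) ^ 3) := by
  set L := φ.len with hLdef
  have hL : 1 ≤ L := Fml.one_le_len φ
  have hm : φ.md ≤ L := Fml.md_le_len φ
  have hs : φ.sub.card ≤ L := Fml.sub_card_le_len φ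
  have hJ : JJ φ ≤ 2 ^ L := Nat.pow_le_pow_right (by norm_num) hs
  have hF : FF φ φ.md ≤ 2 ^ ((2 * L + 2) * (L + 1)) := by
    calc FF φ φ.md = KK φ ^ (φ.md + 1) := rfl
      _ ≤ (2 ^ (2 * L + 2)) ^ (φ.md + 1) := Nat.pow_le_pow_left (numeric_KK φ) _
      _ = 2 ^ ((2 * L + 2) * (φ.md + 1)) := by rw [← pow_mul]
      _ ≤ 2 ^ ((2 * L + 2) * (L + 1)) := by
          apply Nat.pow_le_pow_right (by norm_num)
          exact Nat.mul_le_mul_left _ (by omega)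
  have hexp : L + (2 * L + 2) * (L + 1) ≤ (L + 2) ^ 3 := by
    have e1 : 2 * (L + 2) ^ 2 ≤ (L + 2) ^ 3 := by
      have e2 : (L + 2) ^ 3 = (L + 2) * (L + 2) ^ 2 := by ring
      rw [e2]
      exact Nat.mul_le_mul_right _ (by omega)
    have e3 : 2 * (L + 2) ^ 2 = 2 * L ^ 2 + 8 * L + 8 := by ring
    have e4 : L + (2 * L + 2) * (L + 1) = 2 * L ^ 2 + 5 * L + 2 := by ring
    omega
  calc JJ φ * FF φ φ.md ≤ 2 ^ L * 2 ^ ((2 * L + 2) * (L + 1)) := Nat.mul_le_mul hJ hF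
    _ = 2 ^ (L + (2 * L + 2) * (L + 1)) := by rw [← pow_add]
    _ ≤ 2 ^ ((L + 2) ^ 3) := Nat.pow_le_pow_right (by norm_num) hexp

lemma final_Idx : Nat.card (Idx Q) ≤ 2 ^ ((φ.len + 2) ^ 5) := by
  refine (card_Idx_le Q).trans ((numeric_Idx φ).trans ?_)
  apply Nat.pow_le_pow_right (by norm_num)
  apply Nat.pow_le_pow_right (by have := Fml.one_le_len φ; omega)
  norm_num

lemma final_NW : Nat.card (NW Q) ≤ 2 ^ ((φ.len + 2) ^ 5) := by
  set L := φ.len with hLdef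
  have hL : 1 ≤ L := Fml.one_le_len φ
  have hm : φ.md ≤ L := Fml.md_le_len φ
  set B := (L + 2) ^ 3 with hBdef
  have hI : Nat.card (Idx Q) ≤ 2 ^ B := (card_Idx_le Q).trans (numeric_Idx φ)
  have hstep : Nat.card (Step Q) + 1 ≤ 2 ^ (B + L + 1) := by
    have h1 : Nat.card (Step Q) ≤ Nat.card (Idx Q) * L + 1 := card_Step_le Q
    have h2 : Nat.card (Idx Q) * L ≤ 2 ^ B * 2 ^ L := by
      refine Nat.mul_le_mul hI ?_
      exact (Nat.lt_two_pow_self (n := L)).le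
    have h3 : 2 ^ B * 2 ^ L = 2 ^ (B + L) := by rw [← pow_add]
    have h4 : (2 : ℕ) ≤ 2 ^ (B + L) := by
      have : (2 : ℕ) ^ 1 ≤ 2 ^ (B + L) := Nat.pow_le_pow_right (by norm_num) (by omega)
      simpa using this
    have h5 : 2 ^ (B + L + 1) = 2 ^ (B + L) + 2 ^ (B + L) := by ring
    omega
  have hexp : (B + L + 1) * (L + 1) ≤ (L + 2) ^ 5 := by
    have e1 : L + 1 ≤ (L + 2) ^ 3 := by
      calc L + 1 ≤ L + 2 := by omega
        _ ≤ (L + 2) ^ 3 := Nat.le_self_pow (by norm_num) _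
    have e2 : B + L + 1 ≤ 2 * (L + 2) ^ 3 := by omega
    calc (B + L + 1) * (L + 1) ≤ (2 * (L + 2) ^ 3) * (L + 2) :=
          Nat.mul_le_mul e2 (by omega)
      _ = 2 * (L + 2) ^ 4 := by ring
      _ ≤ (L + 2) * (L + 2) ^ 4 := Nat.mul_le_mul_right _ (by omega)
      _ = (L + 2) ^ 5 := by ring
  calc Nat.card (NW Q) ≤ (Nat.card (Step Q) + 1) ^ (φ.md + 1) := card_NW_le Q
    _ ≤ (2 ^ (B + L + 1)) ^ (L + 1) := by
        calc (Nat.card (Step Q) + 1) ^ (φ.md + 1)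
            ≤ (2 ^ (B + L + 1)) ^ (φ.md + 1) := Nat.pow_le_pow_left hstep _
          _ ≤ (2 ^ (B + L + 1)) ^ (L + 1) :=
              Nat.pow_le_pow_right (by positivity) (by omega)
    _ = 2 ^ ((B + L + 1) * (L + 1)) := by rw [← pow_mul]
    _ ≤ 2 ^ ((L + 2) ^ 5) := Nat.pow_le_pow_right (by norm_num) hexp

end
end SmallQM

/-- if φ has a quasimodel, it has a quasimodel whose set of worlds and index
set are both finite of size at most exponential in a fixed polynomial of |φ|. -/
theorem stmt_3 : ∃ k : ℕ, ∀ φ : Fml, Nonempty (Quasimodel φ) →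
    ∃ Q : Quasimodel φ, Finite Q.W ∧ Finite Q.I ∧
      Nat.card Q.W ≤ 2 ^ ((φ.len + 2) ^ k) ∧ Nat.card Q.I ≤ 2 ^ ((φ.len + 2) ^ k) := by
  refine ⟨5, ?_⟩
  intro φ hQ
  obtain ⟨Q⟩ := hQ
  refine ⟨SmallQM.smallQM Q, ?_, ?_, ?_, ?_⟩
  · exact inferInstanceAs (Finite (SmallQM.NW Q))
  · exact inferInstanceAs (Finite (SmallQM.Idx Q))
  · exact SmallQM.final_NW Q
  · exact SmallQM.final_Idx Q
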